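/- Let B be a real symmetric 16×16 matrix (indexed by 1 ≤ A, C ≤ 16, so B_{AC} = B_{CA}) satisfying ∑_{i=2}^{8} B_{ii} = −14, ∑_{α=9}^{16} B_{αα} = −8, and ∑_{A=1}^{16} ∑_{C=1}^{16} B_{AC}² = 36. Then B is diagonal with B_{11} = 0, B_{ii} = −2 for 2 ≤ i ≤ 8, and B_{αα} = −1 for 9 ≤ α ≤ 16; that is, B_{AC} = −c_A·δ_{AC} where c₁ = 0, c_A = 2 for 2 ≤ A ≤ 8, and c_A = 1 for 9 ≤ A ≤ 16. (This is the rigidity of the Hessian of the Busemann function in the splitting theorem for manifolds with Spin(9) holonomy and λ₁(M) = 121.) -/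

import Mathlib

open Finset

/-- Rigidity of the Hessian of the Busemann function in the splitting theorem for
Spin(9) holonomy: if `B` is a symmetric real 16×16 matrix (indices `0, …, 15`
corresponding to `1, …, 16`) with `∑_{i=2}^{8} Bᵢᵢ = -14`, `∑_{α=9}^{16} B_{αα} = -8`
and `∑ B² = 36`, then `B` is diagonal with `B₁₁ = 0`, `Bᵢᵢ = -2` for `2 ≤ i ≤ 8` and
`B_{αα} = -1` for `9 ≤ α ≤ 16`. -/
theorem spin9_busemann_hessian_rigidity (B : Matrix (Fin 16) (Fin 16) ℝ)
    (hsymm : ∀ i j : Fin 16, B i j = B j i)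
    (h1 : ∑ i ∈ Finset.univ.filter (fun i : Fin 16 => 1 ≤ (i : ℕ) ∧ (i : ℕ) < 8), B i i
      = -14)
    (h2 : ∑ i ∈ Finset.univ.filter (fun i : Fin 16 => 8 ≤ (i : ℕ)), B i i = -8)
    (h3 : ∑ i : Fin 16, ∑ j : Fin 16, (B i j) ^ 2 = 36) :
    B 0 0 = 0 ∧
      (∀ i : Fin 16, 1 ≤ (i : ℕ) → (i : ℕ) < 8 → B i i = -2) ∧
      (∀ i : Fin 16, 8 ≤ (i : ℕ) → B i i = -1) ∧
      (∀ i j : Fin 16, i ≠ j → B i j = 0) := by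
  set g : Fin 16 → ℝ := fun i => if (i : ℕ) = 0 then 0 else if (i : ℕ) < 8 then -2 else -1 with hg
  set s1 := Finset.univ.filter (fun i : Fin 16 => 1 ≤ (i : ℕ) ∧ (i : ℕ) < 8) with hs1
  set s2 := Finset.univ.filter (fun i : Fin 16 => 8 ≤ (i : ℕ)) with hs2
  have expand : ∀ i : Fin 16, ∑ j : Fin 16, (B i j - (if i = j then g i else 0))^2
      = (∑ j : Fin 16, (B i j)^2) - (2 * B i i * g i - (g i)^2) := by
    intro i
    have key : ∀ j : Fin 16, (B i j - (if i = j then g i else 0))^2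
        = (B i j)^2 - (if i = j then 2 * B i i * g i - (g i)^2 else 0) := by
      intro j
      split
      · rename_i h; rw [← h]; ring
      · ring
    simp only [key, Finset.sum_sub_distrib, Finset.sum_ite_eq, Finset.mem_univ, if_true]
  have hsplit : ∀ F : Fin 16 → ℝ, ∑ i : Fin 16, F i = F 0 + ((∑ i ∈ s1, F i) + ∑ i ∈ s2, F i) := by
    intro F
    rw [show (Finset.univ : Finset (Fin 16)) = insert 0 (s1 ∪ s2) from by
        rw [hs1, hs2]; decide,
      Finset.sum_insert (by rw [hs1, hs2]; decide),
      Finset.sum_union (by rw [hs1, hs2]; decide)]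
  have hg1 : ∀ i ∈ s1, g i = -2 := by
    intro i hi
    rw [hs1, Finset.mem_filter] at hi
    simp [hg, show (i : ℕ) ≠ 0 from by omega, hi.2.2, show i ≠ 0 from fun h => by rw [h] at hi; simp at hi]
  have hg2 : ∀ i ∈ s2, g i = -1 := by
    intro i hi
    rw [hs2, Finset.mem_filter] at hi
    simp [hg, show (i : ℕ) ≠ 0 from by omega, show ¬ (i : ℕ) < 8 from by omega, show i ≠ 0 from fun h => by rw [h] at hi; simp at hi]
  have hc1 : (s1.card : ℝ) = 7 := by rw [hs1]; norm_num [show (Finset.univ.filter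
      (fun i : Fin 16 => 1 ≤ (i : ℕ) ∧ (i : ℕ) < 8)).card = 7 from by decide]
  have hc2 : (s2.card : ℝ) = 8 := by rw [hs2]; norm_num [show (Finset.univ.filter
      (fun i : Fin 16 => 8 ≤ (i : ℕ))).card = 8 from by decide]
  have hlin : ∑ i : Fin 16, (2 * B i i * g i - (g i)^2) = 36 := by
    rw [hsplit]
    have e1 : ∑ i ∈ s1, (2 * B i i * g i - (g i)^2) = -4 * ∑ i ∈ s1, B i i - 4 * s1.card := by
      rw [show ∑ i ∈ s1, (2 * B i i * g i - (g i)^2) = ∑ i ∈ s1, (-4 * B i i - 4) from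
        Finset.sum_congr rfl fun i hi => by rw [hg1 i hi]; ring]
      simp [Finset.sum_sub_distrib, ← Finset.mul_sum, Finset.sum_const, nsmul_eq_mul]
      ring
    have e2 : ∑ i ∈ s2, (2 * B i i * g i - (g i)^2) = -2 * ∑ i ∈ s2, B i i - s2.card := by
      rw [show ∑ i ∈ s2, (2 * B i i * g i - (g i)^2) = ∑ i ∈ s2, (-2 * B i i - 1) from
        Finset.sum_congr rfl fun i hi => by rw [hg2 i hi]; ring]
      simp [Finset.sum_sub_distrib, ← Finset.mul_sum, Finset.sum_const, nsmul_eq_mul]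
    rw [e1, e2, h1, h2, hc1, hc2]
    norm_num [hg]
  have hzero : ∑ i : Fin 16, ∑ j : Fin 16, (B i j - (if i = j then g i else 0))^2 = 0 := by
    simp only [expand, Finset.sum_sub_distrib, h3, hlin]
    norm_num
  have hall : ∀ i j : Fin 16, B i j = (if i = j then g i else 0) := by
    intro i j
    have ha := (Finset.sum_eq_zero_iff_of_nonneg (fun i _ =>
      Finset.sum_nonneg (fun j _ => sq_nonneg _))).mp hzero i (Finset.mem_univ i)
    have hb := (Finset.sum_eq_zero_iff_of_nonneg (fun j _ => sq_nonneg _)).mp ha j (Finset.mem_univ j)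
    have := pow_eq_zero_iff (n := 2) (by norm_num) |>.mp hb
    linarith [this]
  refine ⟨?_, ?_, ?_, ?_⟩
  · simpa [hg] using hall 0 0
  · intro i hi1 hi8
    simpa [hg, show (i:ℕ) ≠ 0 from by omega, hi8, show i ≠ 0 from fun h => by rw [h] at hi1; simp at hi1] using hall i i
  · intro i hi
    simpa [hg, show ¬ (i:ℕ) = 0 from by omega, show ¬ (i:ℕ) < 8 from by omega, show i ≠ 0 from fun h => by rw [h] at hi; simp at hi] using hall i i
  · intro i j hij
    simpa [hij] using hall i j
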